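/- The sequence Δ_k = ∫_0^1 u(1-u)·e^{k-1+u}·(k-1)!/(k-1+u)^{k+1} du is strictly decreasing for k ≥ 2, i.e., Δ_{k+1} < Δ_k for all k ≥ 2. -/
import Mathlib

open Real in
private lemma key_ineq (k : ℕ) (hk : 2 ≤ k) (u : ℝ) (hu0 : 0 < u) (hu1 : u ≤ 1) :
    Real.exp 1 * k * ((k : ℝ) - 1 + u) ^ (k + 1) < ((k : ℝ) + u) ^ (k + 2) := by
  have hk2 : (2 : ℝ) ≤ (k : ℝ) := by exact_mod_cast hk
  set x : ℝ := (k : ℝ) + u with hx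
  have hx2 : 2 < x := by simp only [hx]; linarith
  have hxpos : 0 < x := by linarith
  have hy : (k : ℝ) - 1 + u = x * (1 - 1/x) := by
    field_simp
    simp only [hx]; ring
  have h1 : 0 ≤ 1 - 1/x := by
    have : 1/x ≤ 1/2 := by
      apply one_div_le_one_div_of_le <;> linarith
    linarith
  have h2 : (1 - 1/x) ≤ Real.exp (-(1/x)) := by
    have := Real.add_one_le_exp (-(1/x)); linarith
  have h3 : (1 - 1/x) ^ (k+1) ≤ Real.exp (-(1/x)) ^ (k+1) :=
    pow_le_pow_left₀ h1 h2 _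
  have h4 : Real.exp (-(1/x)) ^ (k+1) = Real.exp (-((k+1)/x)) := by
    rw [← Real.exp_nat_mul]; congr 1; push_cast; ring
  have h5 : Real.exp 1 * Real.exp (-((k+1)/x)) = Real.exp (1 - (k+1)/x) := by
    rw [← Real.exp_add]; ring_nf
  have h6 : (1 : ℝ) - (k+1)/x ≤ 0 := by
    rw [sub_nonpos, le_div_iff₀ hxpos]; simp only [hx]; linarith
  have h7 : Real.exp (1 - (k+1)/x) ≤ 1 :=
    le_of_le_of_eq (Real.exp_le_exp.2 h6) Real.exp_zero
  calc Real.exp 1 * k * ((k : ℝ) - 1 + u) ^ (k + 1)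
      = (k : ℝ) * x ^ (k+1) * (Real.exp 1 * (1 - 1/x) ^ (k+1)) := by
        rw [hy, mul_pow]; ring
    _ ≤ (k : ℝ) * x ^ (k+1) * 1 := by
        apply mul_le_mul_of_nonneg_left _ (by positivity)
        calc Real.exp 1 * (1 - 1/x) ^ (k+1)
            ≤ Real.exp 1 * Real.exp (-(1/x)) ^ (k+1) := by
              apply mul_le_mul_of_nonneg_left h3 (Real.exp_pos 1).le
          _ = Real.exp (1 - (k+1)/x) := by rw [h4, h5]
          _ ≤ 1 := h7
    _ < x * x ^ (k+1) := by
        rw [mul_one]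
        exact mul_lt_mul_of_pos_right (by simp only [hx]; linarith) (by positivity)
    _ = x ^ (k+2) := by ring

theorem Delta_k_strict_anti (k : ℕ) (hk : 2 ≤ k) :
    (∫ u in (0 : ℝ)..1,
        u * (1 - u) * Real.exp (((k : ℝ) + 1) - 1 + u) * (Nat.factorial ((k + 1) - 1) : ℝ) /
          (((k : ℝ) + 1) - 1 + u) ^ ((k + 1) + 1))
      < ∫ u in (0 : ℝ)..1,
          u * (1 - u) * Real.exp ((k : ℝ) - 1 + u) * (Nat.factorial (k - 1) : ℝ) /
            ((k : ℝ) - 1 + u) ^ (k + 1) := by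
  have hk2 : (2 : ℝ) ≤ (k : ℝ) := by exact_mod_cast hk
  have hfact : (Nat.factorial ((k + 1) - 1) : ℝ) = k * (Nat.factorial (k - 1) : ℝ) := by
    rcases Nat.exists_eq_add_of_le hk with ⟨m, rfl⟩
    rw [show (2 + m + 1) - 1 = (1 + m) + 1 by omega, show (2 + m) - 1 = 1 + m by omega,
      Nat.factorial_succ]
    push_cast; ring
  -- pointwise inequality
  have hpt : ∀ u : ℝ, 0 < u → u ≤ 1 →
      u * (1 - u) * Real.exp (((k : ℝ) + 1) - 1 + u) * (Nat.factorial ((k + 1) - 1) : ℝ) /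
          (((k : ℝ) + 1) - 1 + u) ^ ((k + 1) + 1)
        ≤ u * (1 - u) * Real.exp ((k : ℝ) - 1 + u) * (Nat.factorial (k - 1) : ℝ) /
            ((k : ℝ) - 1 + u) ^ (k + 1) ∧
      (u < 1 →
      u * (1 - u) * Real.exp (((k : ℝ) + 1) - 1 + u) * (Nat.factorial ((k + 1) - 1) : ℝ) /
          (((k : ℝ) + 1) - 1 + u) ^ ((k + 1) + 1)
        < u * (1 - u) * Real.exp ((k : ℝ) - 1 + u) * (Nat.factorial (k - 1) : ℝ) /
            ((k : ℝ) - 1 + u) ^ (k + 1)) := by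
    intro u hu0 hu1
    have hkey := key_ineq k hk u hu0 hu1
    have hxpos : (0:ℝ) < (k:ℝ) + u := by linarith
    have hypos : (0:ℝ) < (k:ℝ) - 1 + u := by linarith
    have hA : 0 ≤ u * (1 - u) := by nlinarith
    have hE : (0:ℝ) < Real.exp ((k : ℝ) - 1 + u) := Real.exp_pos _
    have hF : (0:ℝ) < (Nat.factorial (k - 1) : ℝ) := by
      exact_mod_cast Nat.factorial_pos _
    have hsimp1 : ((k : ℝ) + 1) - 1 + u = (k:ℝ) + u := by ring
    have hexp : Real.exp ((k : ℝ) + u)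
        = Real.exp ((k : ℝ) - 1 + u) * Real.exp 1 := by
      rw [← Real.exp_add]; ring_nf
    rw [hsimp1, hexp, hfact, div_le_div_iff₀ (by positivity) (by positivity)]
    constructor
    · calc u * (1 - u) * (Real.exp ((k:ℝ) - 1 + u) * Real.exp 1) *
            ((k:ℝ) * (Nat.factorial (k-1) : ℝ)) * ((k : ℝ) - 1 + u) ^ (k + 1)
          = (u * (1 - u) * Real.exp ((k:ℝ) - 1 + u) * (Nat.factorial (k-1) : ℝ)) *
            (Real.exp 1 * (k:ℝ) * ((k : ℝ) - 1 + u) ^ (k + 1)) := by ring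
        _ ≤ (u * (1 - u) * Real.exp ((k:ℝ) - 1 + u) * (Nat.factorial (k-1) : ℝ)) *
            (((k:ℝ) + u) ^ (k + 2)) := by
            apply mul_le_mul_of_nonneg_left hkey.le (by positivity)
        _ = u * (1 - u) * Real.exp ((k:ℝ) - 1 + u) * (Nat.factorial (k-1) : ℝ) *
            ((k:ℝ) + u) ^ (k + 1 + 1) := by ring
    · intro hu1'
      rw [div_lt_div_iff₀ (by positivity) (by positivity)]
      have hA' : 0 < u * (1 - u) := by nlinarith
      calc u * (1 - u) * (Real.exp ((k:ℝ) - 1 + u) * Real.exp 1) *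
            ((k:ℝ) * (Nat.factorial (k-1) : ℝ)) * ((k : ℝ) - 1 + u) ^ (k + 1)
          = (u * (1 - u) * Real.exp ((k:ℝ) - 1 + u) * (Nat.factorial (k-1) : ℝ)) *
            (Real.exp 1 * (k:ℝ) * ((k : ℝ) - 1 + u) ^ (k + 1)) := by ring
        _ < (u * (1 - u) * Real.exp ((k:ℝ) - 1 + u) * (Nat.factorial (k-1) : ℝ)) *
            (((k:ℝ) + u) ^ (k + 2)) := by
            apply mul_lt_mul_of_pos_left hkey (by positivity)
        _ = u * (1 - u) * Real.exp ((k:ℝ) - 1 + u) * (Nat.factorial (k-1) : ℝ) *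
            ((k:ℝ) + u) ^ (k + 1 + 1) := by ring
  apply intervalIntegral.integral_lt_integral_of_continuousOn_of_le_of_exists_lt
    (by norm_num)
  · apply ContinuousOn.div
    · fun_prop
    · fun_prop
    · intro u hu
      have : (0:ℝ) < ((k:ℝ)+1) - 1 + u := by
        simp only [Set.mem_Icc] at hu; linarith
      positivity
  · apply ContinuousOn.div
    · fun_prop
    · fun_prop
    · intro u hu
      have : (0:ℝ) < (k:ℝ) - 1 + u := by
        simp only [Set.mem_Icc] at hu; linarith
      positivity
  · intro u hu
    exact (hpt u hu.1 hu.2).1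
  · refine ⟨1/2, by norm_num, (hpt (1/2) (by norm_num) (by norm_num)).2 (by norm_num)⟩
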